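/- arXiv:1006.5516 — 3 statements merged into one kernel-verified Lean document; each statement's English description precedes it below -/
import Mathlib

section
/- Let R be a TRS over a ranked alphabet Σ, let m ≥ 0, let Z = {z₁,…,z_m} be fresh constants with Z ∩ Σ = ∅, and for t ∈ T_Σ(X_m) let t_z ∈ T_{Σ∪Z} be obtained by replacing each xᵢ by zᵢ. Then for any p, q ∈ T_Σ(X_m), there exists a term r ∈ T_Σ(X) with p →*_R r and q →*_R r if and only if R*_{Σ∪Z}({p_z}) ∩ R*_{Σ∪Z}({q_z}) ≠ ∅. -/
set_option autoImplicit false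

/-!
Basic framework: ranked alphabets, terms, term rewrite systems,
bottom-up tree automata, recognizability.
A ranked alphabet is modelled by a (finite) type `σ` together with an
arity function `ar : σ → ℕ`.  `Tm.var n` denotes the variable `x_{n+1}`,
so `T_Σ(X_m)` corresponds to terms all of whose variables satisfy `n < m`,
and ground terms (`T_Σ`) are terms satisfying `Tm.Ground`.
-/

/-- Terms over the ranked alphabet `(σ, ar)` with variables `x₁, x₂, …`
(`var n` is `x_{n+1}`). -/
inductive Tm (σ : Type) (ar : σ → ℕ) : Type
  | var : ℕ → Tm σ ar
  | app : (f : σ) → (Fin (ar f) → Tm σ ar) → Tm σ ar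

namespace Tm

variable {σ γ : Type} {ar : σ → ℕ} {arγ : γ → ℕ}

/-- Application of a substitution `θ` (assigning a term to each variable). -/
def subst (θ : ℕ → Tm σ ar) : Tm σ ar → Tm σ ar
  | var n => θ n
  | app f ts => app f fun i => (ts i).subst θ

/-- A term is ground if it contains no variables. -/
def Ground : Tm σ ar → Prop
  | var _ => False
  | app _ ts => ∀ i, (ts i).Ground

/-- The set of (indices of) variables occurring in a term. -/
def vars : Tm σ ar → Set ℕ
  | var n => {n}
  | app _ ts => ⋃ i, (ts i).vars

/-- Number of occurrences of the variable `x_{n+1}` in a term. -/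
def count (n : ℕ) : Tm σ ar → ℕ
  | var m => if m = n then 1 else 0
  | app _ ts => ∑ i, (ts i).count n

/-- A term is linear if every variable occurs at most once in it. -/
def Linear (t : Tm σ ar) : Prop := ∀ n, t.count n ≤ 1

/-- The symbol `s` occurs in the term. -/
def symOccurs (s : σ) : Tm σ ar → Prop
  | var _ => False
  | app f ts => f = s ∨ ∃ i, (ts i).symOccurs s

/-- Height of a term (constants and variables have height 0). -/
def height : Tm σ ar → ℕ
  | var _ => 0
  | app _ ts => Finset.univ.sup fun i => (ts i).height + 1

/-- Renaming of the alphabet along an arity-preserving map. -/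
def map (ι : σ → γ) (h : ∀ s, arγ (ι s) = ar s) : Tm σ ar → Tm γ arγ
  | var n => var n
  | app f ts => app (ι f) fun i => (ts (Fin.cast (h f) i)).map ι h

/-- The subterm of `t` at a position (a list of argument indices), if defined. -/
def subAt : Tm σ ar → List ℕ → Option (Tm σ ar)
  | t, [] => some t
  | var _, _ :: _ => none
  | app f ts, i :: p => if h : i < ar f then (ts ⟨i, h⟩).subAt p else none

/-- Subterm relation. -/
inductive Subtm : Tm σ ar → Tm σ ar → Prop
  | refl (t : Tm σ ar) : Subtm t t
  | app {s : Tm σ ar} {f : σ} {ts : Fin (ar f) → Tm σ ar} (i : Fin (ar f)) :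
      Subtm s (ts i) → Subtm s (Tm.app f ts)

end Tm

section Rewriting

variable {σ γ : Type} {ar : σ → ℕ} {arγ : γ → ℕ}

/-- One-step rewriting by the rule set `R`: apply a rule under a substitution
at the root, or rewrite inside one argument. -/
inductive Step (R : Set (Tm σ ar × Tm σ ar)) : Tm σ ar → Tm σ ar → Prop
  | rule {l r : Tm σ ar} (θ : ℕ → Tm σ ar) (h : (l, r) ∈ R) :
      Step R (l.subst θ) (r.subst θ)
  | congr {f : σ} {ts : Fin (ar f) → Tm σ ar} {t' : Tm σ ar} (i : Fin (ar f)) :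
      Step R (ts i) t' → Step R (Tm.app f ts) (Tm.app f (Function.update ts i t'))

/-- Many-step rewriting: reflexive-transitive closure of `Step`. -/
def Steps (R : Set (Tm σ ar × Tm σ ar)) : Tm σ ar → Tm σ ar → Prop :=
  Relation.ReflTransGen (Step R)

/-- `R` is a term rewrite system: finitely many rules, and every variable of a
right-hand side occurs in the corresponding left-hand side. -/
def IsTRS (R : Set (Tm σ ar × Tm σ ar)) : Prop :=
  R.Finite ∧ ∀ lr ∈ R, lr.2.vars ⊆ lr.1.vars

/-- The set `R*(L)` of descendants of members of `L`. -/
def Desc (R : Set (Tm σ ar × Tm σ ar)) (L : Set (Tm σ ar)) : Set (Tm σ ar) :=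
  {p | ∃ q ∈ L, Steps R q p}

/-- `R` is terminating: there is no infinite reduction sequence. -/
def Terminating (R : Set (Tm σ ar × Tm σ ar)) : Prop :=
  ¬ ∃ f : ℕ → Tm σ ar, ∀ n, Step R (f n) (f (n + 1))

/-- `R` is confluent. -/
def Confluent (R : Set (Tm σ ar × Tm σ ar)) : Prop :=
  ∀ a b c, Steps R a b → Steps R a c → ∃ d, Steps R b d ∧ Steps R c d

/-- `u` is an `R`-normal form of `t`. -/
def NormalFormOf (R : Set (Tm σ ar × Tm σ ar)) (t u : Tm σ ar) : Prop :=
  Steps R t u ∧ ¬ ∃ v, Step R u v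

/-- The term is a variable. -/
def IsVarTm (t : Tm σ ar) : Prop := ∃ n, t = Tm.var n

/-- Every left-hand side is linear. -/
def LeftLinearTRS (R : Set (Tm σ ar × Tm σ ar)) : Prop :=
  ∀ lr ∈ R, lr.1.Linear

/-- All left- and right-hand sides are linear. -/
def LinearTRS (R : Set (Tm σ ar × Tm σ ar)) : Prop :=
  ∀ lr ∈ R, lr.1.Linear ∧ lr.2.Linear

/-- No rule has a variable as left-hand side or as right-hand side. -/
def CollapseFree (R : Set (Tm σ ar × Tm σ ar)) : Prop :=
  ∀ lr ∈ R, ¬ IsVarTm lr.1 ∧ ¬ IsVarTm lr.2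

/-- Transport of a rule set along an arity-preserving renaming of the alphabet. -/
def mapRules (ι : σ → γ) (h : ∀ s, arγ (ι s) = ar s) (R : Set (Tm σ ar × Tm σ ar)) :
    Set (Tm γ arγ × Tm γ arγ) :=
  (fun lr => (lr.1.map ι h, lr.2.map ι h)) '' R

end Rewriting

/-- A bottom-up tree automaton over `(σ, ar)` with state type `Q`:
transition rules `δ(q₁,…,qₙ) → q`, λ-rules `q → q'`, and final states. -/
structure BTA (σ : Type) (ar : σ → ℕ) (Q : Type) where
  trans : ∀ f : σ, (Fin (ar f) → Q) → Q → Prop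
  eps : Q → Q → Prop
  final : Q → Prop

namespace BTA

variable {σ : Type} {ar : σ → ℕ} {Q : Type}

/-- `t →* q`: the (ground) term `t` can be rewritten to the state `q`. -/
inductive Reach (A : BTA σ ar Q) : Tm σ ar → Q → Prop
  | app {f : σ} {ts : Fin (ar f) → Tm σ ar} {qs : Fin (ar f) → Q} {q : Q} :
      (∀ i, Reach A (ts i) (qs i)) → A.trans f qs q → Reach A (Tm.app f ts) q
  | eps {t : Tm σ ar} {q q' : Q} : Reach A t q → A.eps q q' → Reach A t q'

/-- The tree language recognized by the automaton. -/
def Lang (A : BTA σ ar Q) : Set (Tm σ ar) := {t | ∃ q, A.final q ∧ A.Reach t q}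

end BTA

/-- A tree language is recognizable if some bottom-up tree automaton with a
finite state set recognizes it. -/
def Recognizable {σ : Type} {ar : σ → ℕ} (L : Set (Tm σ ar)) : Prop :=
  ∃ (Q : Type) (_ : Finite Q) (A : BTA σ ar Q), A.Lang = L

/-- `R` (a TRS over all of `σ`, thought of as `sign(R)`) preserves
recognizability of finite tree languages: for every ranked alphabet extending
`σ` (i.e. every finite type with an arity-preserving injection from `σ`) and
every finite tree language of ground terms, the descendant set is recognizable. -/
def PRF {σ : Type} {ar : σ → ℕ} (R : Set (Tm σ ar × Tm σ ar)) : Prop :=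
  ∀ (γ : Type) (arγ : γ → ℕ), Finite γ →
    ∀ ι : σ → γ, Function.Injective ι →
      ∀ h : ∀ s, arγ (ι s) = ar s,
        ∀ L : Set (Tm γ arγ), L.Finite → (∀ t ∈ L, t.Ground) →
          Recognizable (Desc (mapRules ι h R) L)

/-- `R` preserves recognizability: as `PRF`, but for arbitrary recognizable
tree languages. -/
def PR {σ : Type} {ar : σ → ℕ} (R : Set (Tm σ ar × Tm σ ar)) : Prop :=
  ∀ (γ : Type) (arγ : γ → ℕ), Finite γ →
    ∀ ι : σ → γ, Function.Injective ι →
      ∀ h : ∀ s, arγ (ι s) = ar s,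
        ∀ L : Set (Tm γ arγ), Recognizable L →
          Recognizable (Desc (mapRules ι h R) L)

/-! ### Fresh constants `z₁,…,z_m` (used in Statements 11–13): the alphabet
`σ ⊕ Fin m`, where `Sum.inr i` is the fresh constant `z_{i+1}`. -/

/-- Arity function of `Σ ∪ Z`. -/
def arZ {σ : Type} (ar : σ → ℕ) (m : ℕ) : σ ⊕ Fin m → ℕ :=
  Sum.elim ar fun _ => 0

/-- `t_z`: replace every occurrence of the variable `xᵢ` (`1 ≤ i ≤ m`,
i.e. `Tm.var n` with `n < m`) by the constant `zᵢ`. -/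
def tmToZ {σ : Type} {ar : σ → ℕ} (m : ℕ) : Tm σ ar → Tm (σ ⊕ Fin m) (arZ ar m)
  | .var n => if h : n < m then .app (Sum.inr ⟨n, h⟩) ![] else .var n
  | .app f ts => .app (Sum.inl f) fun i => tmToZ m (ts i)

section Stmt12Aux

variable {σ : Type} {ar : σ → ℕ} {m : ℕ}

/-- Inverse of `tmToZ`: replace `zᵢ` back by `xᵢ`. -/
def unZ : Tm (σ ⊕ Fin m) (arZ ar m) → Tm σ ar
  | .var n => .var n
  | .app (Sum.inl f) ts => .app f fun i => unZ (ts i)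
  | .app (Sum.inr i) _ => .var i

lemma unZ_tmToZ (t : Tm σ ar) : unZ (tmToZ m t) = t := by
  induction t with
  | var n =>
    by_cases h : n < m <;> simp [tmToZ, unZ, h]
  | app f ts ih => simp [tmToZ, unZ, ih]

lemma tmToZ_subst (θ : ℕ → Tm σ ar) (t : Tm σ ar) :
    tmToZ m (t.subst θ) =
      (t.map Sum.inl (fun _ => rfl)).subst (fun n => tmToZ m (θ n)) := by
  induction t with
  | var n => rfl
  | app f ts ih =>
    simp only [Tm.subst, tmToZ, Tm.map]
    congr 1
    funext i
    simpa using ih i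

lemma unZ_subst (θ : ℕ → Tm (σ ⊕ Fin m) (arZ ar m)) (t : Tm σ ar) :
    unZ ((t.map Sum.inl (fun _ => rfl)).subst θ) = t.subst (fun n => unZ (θ n)) := by
  induction t with
  | var n => rfl
  | app f ts ih =>
    simp only [Tm.subst, Tm.map, unZ]
    congr 1
    funext i
    exact ih i

lemma comp_update {α : Type} {β γ : Type} [DecidableEq α]
    (f : β → γ) (g : α → β) (i : α) (v : β) :
    (fun j => f (Function.update g i v j)) = Function.update (fun j => f (g j)) i (f v) := by
  funext j
  by_cases h : j = i
  · subst h; simp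
  · simp [Function.update_of_ne h]

lemma step_toZ {R : Set (Tm σ ar × Tm σ ar)} {s t : Tm σ ar}
    (h : Step R s t) :
    Step (mapRules Sum.inl (fun _ => rfl) R) (tmToZ m s) (tmToZ m t) := by
  induction h with
  | @rule l r θ hlr =>
    rw [tmToZ_subst, tmToZ_subst]
    exact Step.rule _ ⟨(l, r), hlr, rfl⟩
  | @congr f ts t' i _ ih =>
    simp only [tmToZ]
    have := Step.congr (R := mapRules Sum.inl (fun _ => rfl) R)
      (f := Sum.inl f) (ts := fun j => tmToZ m (ts j)) (t' := tmToZ m t') i ih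
    convert this using 2
    exact comp_update _ _ _ _

lemma step_unZ {R : Set (Tm σ ar × Tm σ ar)}
    {u v : Tm (σ ⊕ Fin m) (arZ ar m)}
    (h : Step (mapRules Sum.inl (fun _ => rfl) R) u v) :
    Step R (unZ u) (unZ v) := by
  induction h with
  | rule θ hlr =>
    obtain ⟨⟨l, r⟩, hlr', heq⟩ := hlr
    obtain ⟨h1, h2⟩ := Prod.mk.injEq .. ▸ heq
    subst h1; subst h2
    exact (unZ_subst θ l).symm ▸ (unZ_subst θ r).symm ▸ Step.rule _ hlr'
  | @congr f ts t' i _ ih =>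
    match f, ts, i with
    | Sum.inl f, ts, i =>
      simp only [unZ]
      have := Step.congr (R := R) (f := f) (ts := fun j => unZ (ts j)) (t' := unZ t') i ih
      convert this using 2
      exact comp_update _ _ _ _

lemma steps_toZ {R : Set (Tm σ ar × Tm σ ar)} {s t : Tm σ ar}
    (h : Steps R s t) :
    Steps (mapRules Sum.inl (fun _ => rfl) R) (tmToZ m s) (tmToZ m t) :=
  Relation.ReflTransGen.lift _ (fun _ _ => step_toZ) _ _ h

lemma steps_unZ {R : Set (Tm σ ar × Tm σ ar)}
    {u v : Tm (σ ⊕ Fin m) (arZ ar m)}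
    (h : Steps (mapRules Sum.inl (fun _ => rfl) R) u v) :
    Steps R (unZ u) (unZ v) :=
  Relation.ReflTransGen.lift _ (fun _ _ => step_unZ) _ _ h

end Stmt12Aux

/-! ### Statement 12 -/

theorem stmt_12 {σ : Type} {ar : σ → ℕ} [Finite σ]
    (R : Set (Tm σ ar × Tm σ ar)) (hR : IsTRS R) (m : ℕ)
    (p q : Tm σ ar)
    -- `p, q ∈ T_Σ(X_m)`
    (hp : p.vars ⊆ {n | n < m}) (hq : q.vars ⊆ {n | n < m}) :
    (∃ r : Tm σ ar, Steps R p r ∧ Steps R q r) ↔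
      (Desc (mapRules Sum.inl (fun _ => rfl) R) {tmToZ m p} ∩
        Desc (mapRules Sum.inl (fun _ => rfl) R) {tmToZ m q}).Nonempty := by
  constructor
  · rintro ⟨r, hpr, hqr⟩
    exact ⟨tmToZ m r, ⟨tmToZ m p, rfl, steps_toZ hpr⟩, ⟨tmToZ m q, rfl, steps_toZ hqr⟩⟩
  · rintro ⟨u, ⟨_, rfl, hpu⟩, ⟨_, rfl, hqu⟩⟩
    refine ⟨unZ u, ?_, ?_⟩
    · have := steps_unZ hpu; rwa [unZ_tmToZ] at this
    · have := steps_unZ hqu; rwa [unZ_tmToZ] at this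
end

section
/- Let R and S be linear collapse-free TRSs over disjoint ranked alphabets Σ and Δ respectively, let Γ be a ranked alphabet with Σ ∪ Δ ⊆ Γ, and consider R and S as TRSs over Γ. Then →_S ∘ →_R ⊆ →_R ∪ (→_R ∘ →_S), i.e., whenever u →_S v →_R w for terms u, v, w over Γ, either u →_R w, or there exists v′ with u →_R v′ →_S w. -/
set_option autoImplicit false

section Aux

variable {σ δ γ : Type} {ar : σ → ℕ} {arδ : δ → ℕ} {arγ : γ → ℕ}

lemma count_map (ι : σ → γ) (h : ∀ s, arγ (ι s) = ar s) (t : Tm σ ar) (n : ℕ) :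
    (t.map ι h).count n = t.count n := by
  induction t with
  | var m => rfl
  | app f ts ih =>
      simp only [Tm.map, Tm.count]
      exact Fintype.sum_equiv (finCongr (h f)) _ _ (fun i => ih _)

lemma mem_vars_iff {t : Tm σ ar} {n : ℕ} : n ∈ t.vars ↔ t.count n ≠ 0 := by
  induction t with
  | var m =>
      simp only [Tm.vars, Tm.count, Set.mem_singleton_iff]
      by_cases h : m = n <;> simp [h] <;> omega
  | app f ts ih =>
      simp [Tm.vars, Tm.count, Set.mem_iUnion, ih, Finset.sum_eq_zero_iff, not_forall]

lemma subst_eq_of_count_zero {t : Tm σ ar} {n : ℕ} (h : t.count n = 0)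
    {θ θ' : ℕ → Tm σ ar} (hag : ∀ m, m ≠ n → θ m = θ' m) :
    t.subst θ = t.subst θ' := by
  induction t with
  | var m =>
      by_cases hm : m = n
      · simp [Tm.count, hm] at h
      · exact hag m hm
  | app f ts ih =>
      simp only [Tm.count, Finset.sum_eq_zero_iff, Finset.mem_univ, true_implies] at h
      simp only [Tm.subst]
      congr 1
      funext i
      exact ih i (h i)

lemma sum_others_zero {k : ℕ} (g : Fin k → ℕ) (h : ∑ i, g i ≤ 1) (i : Fin k) (hi : g i = 1) :
    ∀ j, j ≠ i → g j = 0 := by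
  intro j hj
  have h2 : g i + ∑ x ∈ Finset.univ.erase i, g x = ∑ x, g x :=
    Finset.add_sum_erase _ g (Finset.mem_univ i)
  have h3 : ∑ x ∈ Finset.univ.erase i, g x = 0 := by omega
  exact (Finset.sum_eq_zero_iff.mp h3) j (Finset.mem_erase.mpr ⟨hj, Finset.mem_univ j⟩)

lemma step_subst (X : Set (Tm σ ar × Tm σ ar)) {t : Tm σ ar} {n : ℕ} (hc : t.count n = 1)
    {θ θ' : ℕ → Tm σ ar} (hag : ∀ m, m ≠ n → θ m = θ' m)
    (hs : Step X (θ n) (θ' n)) : Step X (t.subst θ) (t.subst θ') := by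
  induction t with
  | var m =>
      by_cases hm : m = n
      · subst hm; exact hs
      · simp [Tm.count, hm] at hc
  | app f ts ih =>
      simp only [Tm.count] at hc
      obtain ⟨i, hi⟩ : ∃ i, (ts i).count n ≠ 0 := by
        by_contra hall
        push_neg at hall
        simp [Finset.sum_eq_zero (fun i _ => hall i)] at hc
      have hle : (ts i).count n ≤ 1 := by
        calc (ts i).count n ≤ ∑ j, (ts j).count n :=
              Finset.single_le_sum (f := fun j => (ts j).count n) (fun _ _ => Nat.zero_le _) (Finset.mem_univ i)
          _ = 1 := hc
      have hi1 : (ts i).count n = 1 := by omega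
      have hzero := sum_others_zero (fun j => (ts j).count n) (le_of_eq hc) i hi1
      have key : Tm.app f (fun j => (ts j).subst θ') =
          Tm.app f (Function.update (fun j => (ts j).subst θ) i ((ts i).subst θ')) := by
        congr 1
        funext j
        by_cases hj : j = i
        · subst hj; simp
        · rw [Function.update_of_ne hj]
          exact (subst_eq_of_count_zero (hzero j hj) hag).symm
      show Step X (Tm.app f fun j => (ts j).subst θ) (Tm.app f fun j => (ts j).subst θ')
      rw [key]
      exact Step.congr i (ih i hi1)

lemma linear_arg {f : σ} {ts : Fin (ar f) → Tm σ ar} (h : (Tm.app f ts).Linear)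
    (i : Fin (ar f)) : (ts i).Linear := by
  intro n
  have h1 := h n
  simp only [Tm.count] at h1
  calc (ts i).count n ≤ ∑ j, (ts j).count n :=
        Finset.single_le_sum (f := fun j => (ts j).count n) (fun _ _ => Nat.zero_le _) (Finset.mem_univ i)
    _ ≤ 1 := h1

end Aux
section KeyLemmas

variable {σ δ γ : Type} {ar : σ → ℕ} {arδ : δ → ℕ} {arγ : γ → ℕ}
variable (ι₁ : σ → γ) (ι₂ : δ → γ)
variable (har₁ : ∀ s, arγ (ι₁ s) = ar s) (har₂ : ∀ s, arγ (ι₂ s) = arδ s)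

/-- If `u →_S v` and `v = lσ` for a linear pattern `l` over the other alphabet,
then the step happened strictly below a variable of `l`. -/
lemma lemA (hdisj : ∀ s t, ι₁ s ≠ ι₂ t) (S : Set (Tm δ arδ × Tm δ arδ)) (hScf : CollapseFree S) :
    ∀ {u v : Tm γ arγ}, Step (mapRules ι₂ har₂ S) u v →
    ∀ (l : Tm σ ar) (φ : ℕ → Tm γ arγ), l.Linear →
      v = (l.map ι₁ har₁).subst φ →
      ∃ n φ', l.count n = 1 ∧ (∀ m, m ≠ n → φ' m = φ m) ∧
        Step (mapRules ι₂ har₂ S) (φ' n) (φ n) ∧ u = (l.map ι₁ har₁).subst φ' := by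
  intro u v hstep
  induction hstep with
  | @rule l' r' θ hmem =>
      intro l φ hlin hv
      cases l with
      | var n =>
          refine ⟨n, Function.update φ n (l'.subst θ), by simp [Tm.count], ?_, ?_, ?_⟩
          · intro m hm; exact Function.update_of_ne hm _ _
          · simp only [Tm.map, Tm.subst] at hv
            rw [Function.update_self, ← hv]
            exact Step.rule θ hmem
          · simp [Tm.map, Tm.subst]
      | app f ts =>
          exfalso
          obtain ⟨⟨l₂, r₂⟩, hS2, heq⟩ := hmem
          have hr' : r' = r₂.map ι₂ har₂ := by
            have := congrArg Prod.snd heq; simpa using this.symm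
          cases r₂ with
          | var k => exact (hScf _ hS2).2 ⟨k, rfl⟩
          | app e rs =>
              rw [hr'] at hv
              simp only [Tm.map, Tm.subst] at hv
              injection hv with h1 h2
              exact hdisj f e h1.symm
  | @congr g us t' i hstep ih =>
      intro l φ hlin hv
      cases l with
      | var n =>
          refine ⟨n, Function.update φ n (Tm.app g us), by simp [Tm.count], ?_, ?_, ?_⟩
          · intro m hm; exact Function.update_of_ne hm _ _
          · simp only [Tm.map, Tm.subst] at hv
            rw [Function.update_self, ← hv]
            exact Step.congr i hstep
          · simp [Tm.map, Tm.subst]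
      | app f ts =>
          simp only [Tm.map, Tm.subst] at hv
          injection hv with h1 h2
          subst h1
          rw [heq_iff_eq] at h2
          have ht' : t' = ((ts (Fin.cast (har₁ f) i)).map ι₁ har₁).subst φ := by
            have := congrFun h2 i
            rwa [Function.update_self] at this
          obtain ⟨n, φ', hc1, hag, hstepφ, husi⟩ :=
            ih (ts (Fin.cast (har₁ f) i)) φ (linear_arg hlin _) ht'
          have hsum : ∑ j, (ts j).count n ≤ 1 := by
            have := hlin n; simpa only [Tm.count] using this
          have hzero := sum_others_zero (fun j => (ts j).count n) hsum _ hc1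
          refine ⟨n, φ', ?_, hag, hstepφ, ?_⟩
          · simp only [Tm.count]
            have hge : (ts (Fin.cast (har₁ f) i)).count n ≤ ∑ j, (ts j).count n :=
              Finset.single_le_sum (f := fun j => (ts j).count n)
                (fun _ _ => Nat.zero_le _) (Finset.mem_univ _)
            omega
          · simp only [Tm.map, Tm.subst]
            congr 1
            funext j
            by_cases hj : j = i
            · subst hj; exact husi
            · have := congrFun h2 j
              rw [Function.update_of_ne hj] at this
              rw [this]
              refine subst_eq_of_count_zero ?_ (fun m hm => (hag m hm).symm)
              rw [count_map]
              refine hzero _ ?_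
              intro hEq
              exact hj (Fin.ext (by simpa using congrArg Fin.val hEq))

/-- Mirror image of `lemA`: an `R`-step out of an instance of a linear
pattern `l` over the other alphabet happens strictly below a variable. -/
lemma lemC (hdisj : ∀ s t, ι₁ s ≠ ι₂ t) (R : Set (Tm σ ar × Tm σ ar)) (hRcf : CollapseFree R) :
    ∀ {v w : Tm γ arγ}, Step (mapRules ι₁ har₁ R) v w →
    ∀ (l : Tm δ arδ) (θ : ℕ → Tm γ arγ), l.Linear →
      v = (l.map ι₂ har₂).subst θ →
      ∃ n θ', l.count n = 1 ∧ (∀ m, m ≠ n → θ' m = θ m) ∧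
        Step (mapRules ι₁ har₁ R) (θ n) (θ' n) ∧ w = (l.map ι₂ har₂).subst θ' := by
  intro v w hstep
  induction hstep with
  | @rule l' r' ψ hmem =>
      intro l θ hlin hv
      cases l with
      | var n =>
          refine ⟨n, Function.update θ n (r'.subst ψ), by simp [Tm.count], ?_, ?_, ?_⟩
          · intro m hm; exact Function.update_of_ne hm _ _
          · simp only [Tm.map, Tm.subst] at hv
            rw [Function.update_self, ← hv]
            exact Step.rule ψ hmem
          · simp [Tm.map, Tm.subst]
      | app f ts =>
          exfalso
          obtain ⟨⟨l₁, r₁⟩, hR1, heq⟩ := hmem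
          have hl' : l' = l₁.map ι₁ har₁ := by
            have := congrArg Prod.fst heq; simpa using this.symm
          cases l₁ with
          | var k => exact (hRcf _ hR1).1 ⟨k, rfl⟩
          | app e rs =>
              rw [hl'] at hv
              simp only [Tm.map, Tm.subst] at hv
              injection hv with h1 h2
              exact hdisj e f h1
  | @congr g us t' i hstep ih =>
      intro l θ hlin hv
      cases l with
      | var n =>
          refine ⟨n, Function.update θ n (Tm.app g (Function.update us i t')),
            by simp [Tm.count], ?_, ?_, ?_⟩
          · intro m hm; exact Function.update_of_ne hm _ _
          · simp only [Tm.map, Tm.subst] at hv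
            rw [Function.update_self, ← hv]
            exact Step.congr i hstep
          · simp [Tm.map, Tm.subst]
      | app f ts =>
          simp only [Tm.map, Tm.subst] at hv
          injection hv with h1 h2
          subst h1
          rw [heq_iff_eq] at h2
          have hus : us i = ((ts (Fin.cast (har₂ f) i)).map ι₂ har₂).subst θ :=
            congrFun h2 i
          obtain ⟨n, θ', hc1, hag, hstepθ, ht'⟩ :=
            ih (ts (Fin.cast (har₂ f) i)) θ (linear_arg hlin _) hus
          have hsum : ∑ j, (ts j).count n ≤ 1 := by
            have := hlin n; simpa only [Tm.count] using this
          have hzero := sum_others_zero (fun j => (ts j).count n) hsum _ hc1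
          refine ⟨n, θ', ?_, hag, hstepθ, ?_⟩
          · simp only [Tm.count]
            have hge : (ts (Fin.cast (har₂ f) i)).count n ≤ ∑ j, (ts j).count n :=
              Finset.single_le_sum (f := fun j => (ts j).count n)
                (fun _ _ => Nat.zero_le _) (Finset.mem_univ _)
            omega
          · simp only [Tm.map, Tm.subst]
            congr 1
            funext j
            by_cases hj : j = i
            · subst hj; rw [Function.update_self]; exact ht'
            · rw [Function.update_of_ne hj]
              rw [congrFun h2 j]
              refine subst_eq_of_count_zero ?_ fun m hm => (hag m hm).symm
              rw [count_map]
              refine hzero _ ?_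
              intro hEq
              exact hj (Fin.ext (by simpa using congrArg Fin.val hEq))

end KeyLemmas

/-! ### Statement 15 -/

theorem stmt_15 {σ δ γ : Type} {ar : σ → ℕ} {arδ : δ → ℕ} {arγ : γ → ℕ}
    [Finite σ] [Finite δ] [Finite γ]
    (R : Set (Tm σ ar × Tm σ ar)) (S : Set (Tm δ arδ × Tm δ arδ))
    (hR : IsTRS R) (hS : IsTRS S)
    (hRlin : LinearTRS R) (hSlin : LinearTRS S)
    (hRcf : CollapseFree R) (hScf : CollapseFree S)
    -- `Γ` is a ranked alphabet containing the disjoint alphabets `Σ` and `Δ`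
    (ι₁ : σ → γ) (ι₂ : δ → γ)
    (hinj₁ : Function.Injective ι₁) (hinj₂ : Function.Injective ι₂)
    (har₁ : ∀ s, arγ (ι₁ s) = ar s) (har₂ : ∀ s, arγ (ι₂ s) = arδ s)
    (hdisj : ∀ s t, ι₁ s ≠ ι₂ t)
    -- whenever `u →_S v →_R w` (as TRSs over `Γ`) …
    (u v w : Tm γ arγ)
    (huv : Step (mapRules ι₂ har₂ S) u v)
    (hvw : Step (mapRules ι₁ har₁ R) v w) :
    -- … either `u →_R w`, or `u →_R v' →_S w` for some `v'`.
    Step (mapRules ι₁ har₁ R) u w ∨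
      ∃ v' : Tm γ arγ,
        Step (mapRules ι₁ har₁ R) u v' ∧ Step (mapRules ι₂ har₂ S) v' w := by
  revert u
  induction hvw with
  | @rule l' r' φ hmem =>
      intro u huv
      obtain ⟨⟨l₁, r₁⟩, hR1, heq⟩ := hmem
      have hl' : l' = l₁.map ι₁ har₁ := by
        have := congrArg Prod.fst heq; simpa using this.symm
      have hr' : r' = r₁.map ι₁ har₁ := by
        have := congrArg Prod.snd heq; simpa using this.symm
      subst hl' hr'
      obtain ⟨n, φ', hc, hag, hstepS, hu⟩ :=
        lemA ι₁ ι₂ har₁ har₂ hdisj S hScf huv l₁ φ (hRlin _ hR1).1 rfl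
      have hmem' : (l₁.map ι₁ har₁, r₁.map ι₁ har₁) ∈ mapRules ι₁ har₁ R :=
        ⟨(l₁, r₁), hR1, rfl⟩
      by_cases hr0 : r₁.count n = 0
      · left
        have heq2 : (r₁.map ι₁ har₁).subst φ' = (r₁.map ι₁ har₁).subst φ :=
          subst_eq_of_count_zero (by rwa [count_map]) hag
        rw [hu, ← heq2]
        exact Step.rule φ' hmem'
      · right
        refine ⟨(r₁.map ι₁ har₁).subst φ', ?_, ?_⟩
        · rw [hu]; exact Step.rule φ' hmem'
        · refine step_subst _ ?_ hag hstepS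
          rw [count_map]
          have h5 : Tm.count n r₁ ≤ 1 := (hRlin _ hR1).2 n
          omega
  | @congr g ts t' i hstep ih =>
      intro u huv
      generalize hveq : Tm.app g ts = vv at huv
      cases huv with
      | @rule l' r' θ hmem' =>
          obtain ⟨⟨l₂, r₂⟩, hS2, heqr⟩ := hmem'
          have hl' : l' = l₂.map ι₂ har₂ := by
            have := congrArg Prod.fst heqr; simpa using this.symm
          have hr' : r' = r₂.map ι₂ har₂ := by
            have := congrArg Prod.snd heqr; simpa using this.symm
          subst hl' hr'
          obtain ⟨n, θ', hc, hag, hstepR, hw⟩ :=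
            lemC ι₁ ι₂ har₁ har₂ hdisj R hRcf (Step.congr i hstep) r₂ θ
              (hSlin _ hS2).2 hveq
          have hnl : l₂.count n = 1 := by
            have h1 : n ∈ Tm.vars r₂ := mem_vars_iff.mpr (by omega)
            have h2 : n ∈ Tm.vars l₂ := hS.2 _ hS2 h1
            have h3 := mem_vars_iff.mp h2
            have h4 : Tm.count n l₂ ≤ 1 := (hSlin _ hS2).1 n
            omega
          right
          refine ⟨(l₂.map ι₂ har₂).subst θ', ?_, ?_⟩
          · exact step_subst _ (by rwa [count_map])
              (fun m hm => (hag m hm).symm) hstepR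
          · rw [hw]
            exact Step.rule θ' ⟨(l₂, r₂), hS2, rfl⟩
      | @congr g' us v₀ j hS' =>
          injection hveq with h1 h2
          subst h1
          rw [heq_iff_eq] at h2
          have hts := h2
          by_cases hij : i = j
          · subst hij
            have hts_i : ts i = v₀ := by rw [hts]; simp
            have hSui : Step (mapRules ι₂ har₂ S) (us i) (ts i) := by
              rw [hts_i]; exact hS'
            have hkey : Function.update ts i t' = Function.update us i t' := by
              rw [hts, Function.update_idem]
            rcases ih (us i) hSui with hL | ⟨v'', h1, h2⟩
            · left
              rw [hkey]
              exact Step.congr i hL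
            · right
              refine ⟨Tm.app g (Function.update us i v''), Step.congr i h1, ?_⟩
              have h2' : Step (mapRules ι₂ har₂ S) ((Function.update us i v'') i) t' := by
                rw [Function.update_self]; exact h2
              have := Step.congr i h2'
              rwa [Function.update_idem, ← hkey] at this
          · have hts_i : ts i = us i := by rw [hts]; exact Function.update_of_ne hij _ _
            right
            refine ⟨Tm.app g (Function.update us i t'),
              Step.congr i (by rw [← hts_i]; exact hstep), ?_⟩
            have h2 : Step (mapRules ι₂ har₂ S) ((Function.update us i t') j) v₀ := by
              rw [Function.update_of_ne (Ne.symm hij)]; exact hS'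
            have := Step.congr j h2
            have heq3 : Function.update (Function.update us i t') j v₀ =
                Function.update ts i t' := by
              rw [hts, Function.update_comm hij]
            rwa [heq3] at this
end

section
/- Let R and S be TRSs over disjoint ranked alphabets Σ and Δ respectively, such that no left-hand side of any rule of R ⊕ S is a variable. If the disjoint union R ⊕ S (a TRS over Σ ∪ Δ) preserves recognizability of finite tree languages (is a PRF-TRS), then both R and S preserve recognizability of finite tree languages (are PRF-TRSs). -/
set_option autoImplicit false

/-! ### Statement 18: if `R ⊕ S` is a PRF-TRS (and no left-hand side is a
variable), then so are `R` and `S`. -/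

/-! ### Auxiliary machinery for the proof of statement 18 -/

section MapLemmas

variable {σ γ β : Type} {ar : σ → ℕ} {arγ : γ → ℕ} {arβ : β → ℕ}

theorem Tm.map_map (ι₁ : σ → γ) (h₁ : ∀ s, arγ (ι₁ s) = ar s)
    (ι₂ : γ → β) (h₂ : ∀ s, arβ (ι₂ s) = arγ s) (t : Tm σ ar) :
    (t.map ι₁ h₁).map ι₂ h₂ =
      t.map (fun s => ι₂ (ι₁ s)) (fun s => (h₂ (ι₁ s)).trans (h₁ s)) := by
  induction t with
  | var n => rfl
  | app f ts ih =>
    simp only [Tm.map]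
    congr 1
    funext i
    exact ih _

theorem mapRules_map_map (ι₁ : σ → γ) (h₁ : ∀ s, arγ (ι₁ s) = ar s)
    (ι₂ : γ → β) (h₂ : ∀ s, arβ (ι₂ s) = arγ s) (R : Set (Tm σ ar × Tm σ ar)) :
    mapRules ι₂ h₂ (mapRules ι₁ h₁ R) =
      mapRules (fun s => ι₂ (ι₁ s)) (fun s => (h₂ (ι₁ s)).trans (h₁ s)) R := by
  unfold mapRules
  rw [Set.image_image]
  simp only [Tm.map_map]

theorem mapRules_union (ι : σ → γ) (h : ∀ s, arγ (ι s) = ar s)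
    (R S : Set (Tm σ ar × Tm σ ar)) :
    mapRules ι h (R ∪ S) = mapRules ι h R ∪ mapRules ι h S :=
  Set.image_union _ _ _

theorem Tm.vars_map (ι : σ → γ) (h : ∀ s, arγ (ι s) = ar s) (t : Tm σ ar) :
    (t.map ι h).vars = t.vars := by
  induction t with
  | var n => rfl
  | app f ts ih =>
    simp only [Tm.map, Tm.vars]
    ext n
    simp only [Set.mem_iUnion]
    constructor
    · rintro ⟨i, hi⟩
      rw [ih] at hi
      exact ⟨Fin.cast (h f) i, hi⟩
    · rintro ⟨j, hj⟩
      refine ⟨Fin.cast (h f).symm j, ?_⟩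
      rw [ih]
      exact hj

theorem Tm.subst_map (ι : σ → γ) (h : ∀ s, arγ (ι s) = ar s)
    (θ : ℕ → Tm σ ar) (t : Tm σ ar) :
    (t.subst θ).map ι h = (t.map ι h).subst (fun n => (θ n).map ι h) := by
  induction t with
  | var n => rfl
  | app f ts ih =>
    simp only [Tm.subst, Tm.map]
    congr 1
    funext i
    exact ih _

theorem Tm.ground_map (ι : σ → γ) (h : ∀ s, arγ (ι s) = ar s)
    {t : Tm σ ar} (hg : t.Ground) : (t.map ι h).Ground := by
  induction t with
  | var n => exact hg.elim
  | app f ts ih =>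
    intro i
    exact ih _ (hg _)

theorem Tm.subst_eqOn {θ₁ θ₂ : ℕ → Tm σ ar} (t : Tm σ ar)
    (h : ∀ n ∈ t.vars, θ₁ n = θ₂ n) : t.subst θ₁ = t.subst θ₂ := by
  induction t with
  | var n => exact h n rfl
  | app f ts ih =>
    simp only [Tm.subst]
    congr 1
    funext i
    exact ih i (fun n hn => h n (Set.mem_iUnion.mpr ⟨i, hn⟩))

theorem step_mono {R S : Set (Tm σ ar × Tm σ ar)} (hsub : R ⊆ S)
    {t u : Tm σ ar} (h : Step R t u) : Step S t u := by
  induction h with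
  | rule θ hmem => exact Step.rule θ (hsub hmem)
  | congr i _ ih => exact Step.congr i ih

end MapLemmas

section SumEmbedding

variable {α β : Type} {ara : α → ℕ} {arb : β → ℕ}

/-- Embedding of terms over `α` into terms over `α ⊕ β`. -/
def eL (t : Tm α ara) : Tm (α ⊕ β) (Sum.elim ara arb) :=
  t.map Sum.inl (fun _ => rfl)

/-- Retraction of terms over `α ⊕ β` back to terms over `α` (junk on `inr`). -/
def unL : Tm (α ⊕ β) (Sum.elim ara arb) → Tm α ara
  | .var n => .var n
  | .app (Sum.inl f) ts => .app f (fun i => unL (ts i))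
  | .app (Sum.inr _) _ => .var 0

theorem eL_app (f : α) (ts : Fin (ara f) → Tm α ara) :
    (eL (Tm.app f ts) : Tm (α ⊕ β) (Sum.elim ara arb)) =
      Tm.app (Sum.inl f) (fun i => eL (ts i)) := rfl

theorem unL_eL (t : Tm α ara) : unL (eL (arb := arb) t) = t := by
  induction t with
  | var n => rfl
  | app f ts ih =>
    rw [eL_app]
    simp only [unL]
    congr 1
    funext i
    exact ih i

theorem eL_injective : Function.Injective (eL (α := α) (β := β) (ara := ara) (arb := arb)) :=
  fun a b h => by rw [← unL_eL (arb := arb) a, ← unL_eL (arb := arb) b, h]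

theorem subst_eL (l : Tm α ara) (θ : ℕ → Tm (α ⊕ β) (Sum.elim ara arb)) (t : Tm α ara)
    (h : (eL l).subst θ = eL t) :
    t = l.subst (fun n => unL (θ n)) ∧ ∀ n ∈ l.vars, θ n = eL (unL (θ n)) := by
  induction l generalizing t with
  | var n =>
    have h' : θ n = eL t := h
    constructor
    · show t = unL (θ n)
      rw [h', unL_eL]
    · intro m hm
      have : m = n := hm
      subst this
      rw [h', unL_eL]
  | app f ts ih =>
    rw [eL_app] at h
    simp only [Tm.subst] at h
    cases t with
    | var m => exact absurd h (by simp [eL, Tm.map])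
    | app g ss =>
      rw [eL_app] at h
      injection h with h1 h2
      have hfg : f = g := Sum.inl.inj h1
      subst hfg
      have h2' := eq_of_heq h2
      have hcomp : ∀ i, (eL (ts i)).subst θ = eL (ss i) := fun i => congrFun h2' i
      constructor
      · show Tm.app f ss = Tm.app f (fun i => (ts i).subst (fun n => unL (θ n)))
        congr 1
        funext i
        exact (ih i (ss i) (hcomp i)).1
      · intro n hn
        obtain ⟨i, hi⟩ := Set.mem_iUnion.mp hn
        exact (ih i (ss i) (hcomp i)).2 n hi

end SumEmbedding

section StepTransfer

variable {α β : Type} {ara : α → ℕ} {arb : β → ℕ}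

theorem eL_update (f : α) (ts : Fin (ara f) → Tm α ara) (i : Fin (ara f)) (t' : Tm α ara) :
    (eL (Tm.app f (Function.update ts i t')) : Tm (α ⊕ β) (Sum.elim ara arb)) =
      Tm.app (Sum.inl f) (Function.update (fun j => eL (ts j)) i (eL t')) := by
  rw [eL_app]
  congr 1
  funext j
  by_cases hj : j = i
  · subst hj; simp only [Function.update_self]; exact congrArg _ (Function.update_self _ _ _)
  · simp only [Function.update_of_ne hj]; exact congrArg _ (Function.update_of_ne hj _ _)

theorem step_lift (R : Set (Tm α ara × Tm α ara)) {s s' : Tm α ara} (hst : Step R s s') :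
    Step (mapRules Sum.inl (fun _ => rfl) R :
        Set (Tm (α ⊕ β) (Sum.elim ara arb) × Tm (α ⊕ β) (Sum.elim ara arb)))
      (eL s) (eL s') := by
  induction hst with
  | @rule l r θ hmem =>
    have h1 := Tm.subst_map (ar := ara) (arγ := Sum.elim ara arb) Sum.inl (fun _ => rfl) θ l
    have h2 := Tm.subst_map (ar := ara) (arγ := Sum.elim ara arb) Sum.inl (fun _ => rfl) θ r
    unfold eL
    erw [h1, h2]
    exact Step.rule _ ⟨(l, r), hmem, rfl⟩
  | @congr f ts t' i hstep ih =>
    rw [eL_update, eL_app]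
    exact Step.congr (f := Sum.inl f) (ts := fun j => eL (ts j)) i ih

end StepTransfer

section StepTransfer2

variable {α β : Type} {ara : α → ℕ} {arb : β → ℕ}

theorem step_reflect (R : Set (Tm α ara × Tm α ara)) (S : Set (Tm β arb × Tm β arb))
    (hRv : ∀ lr ∈ R, lr.2.vars ⊆ lr.1.vars)
    (hvarS : ∀ lr ∈ S, ¬ IsVarTm lr.1)
    {u v : Tm (α ⊕ β) (Sum.elim ara arb)}
    (hst : Step (mapRules Sum.inl (fun _ => rfl) R ∪ mapRules Sum.inr (fun _ => rfl) S) u v) :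
    ∀ t : Tm α ara, u = eL t → ∃ v₀, v = eL v₀ ∧ Step R t v₀ := by
  induction hst with
  | @rule l r θ hmem =>
    intro t ht
    rcases hmem with ⟨⟨l₀, r₀⟩, hlr, heq⟩ | ⟨⟨l₀, r₀⟩, hlr, heq⟩
    · cases heq
      have key := subst_eL l₀ θ t ht
      refine ⟨r₀.subst (fun n => unL (θ n)), ?_, ?_⟩
      · show (eL r₀).subst θ = eL (r₀.subst (fun n => unL (θ n)))
        have hmr : eL (arb := arb) (r₀.subst (fun n => unL (θ n))) =
            (eL r₀).subst (fun n => eL (unL (θ n))) :=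
          Tm.subst_map Sum.inl (fun _ => rfl) _ r₀
        rw [hmr]
        refine Tm.subst_eqOn _ (fun n hn => ?_)
        have hn' : n ∈ r₀.vars := by rw [eL] at hn; exact (Tm.vars_map (ar := ara) _ _ r₀) ▸ hn
        exact key.2 n (hRv _ hlr hn')
      · rw [key.1]
        exact Step.rule _ hlr
    · exfalso
      cases heq
      cases l₀ with
      | var n => exact hvarS _ hlr ⟨n, rfl⟩
      | app f₀ ts₀ =>
        simp only [Tm.map, Tm.subst] at ht
        cases t with
        | var m => exact absurd ht (by simp [eL, Tm.map])
        | app g ss =>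
          rw [eL_app] at ht
          injection ht with h1 _
          exact Sum.inr_ne_inl h1
  | @congr f ts t' i hstep ih =>
    intro t ht
    cases t with
    | var n => simp [eL, Tm.map] at ht
    | app g ss =>
      rw [eL_app] at ht
      injection ht with h1 h2
      subst h1
      have h2' := eq_of_heq h2
      subst h2'
      obtain ⟨v₀, rfl, hstep₀⟩ := ih (ss i) rfl
      refine ⟨Tm.app g (Function.update ss i v₀), ?_,
        Step.congr (f := g) (ts := ss) i hstep₀⟩
      exact (eL_update g ss i v₀).symm

theorem steps_reflect (R : Set (Tm α ara × Tm α ara)) (S : Set (Tm β arb × Tm β arb))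
    (hRv : ∀ lr ∈ R, lr.2.vars ⊆ lr.1.vars)
    (hvarS : ∀ lr ∈ S, ¬ IsVarTm lr.1)
    {u v : Tm (α ⊕ β) (Sum.elim ara arb)}
    (h : Steps (mapRules Sum.inl (fun _ => rfl) R ∪ mapRules Sum.inr (fun _ => rfl) S) u v) :
    ∀ t : Tm α ara, u = eL t → ∃ v₀, v = eL v₀ ∧ Steps R t v₀ := by
  induction h with
  | refl => exact fun t ht => ⟨t, ht, Relation.ReflTransGen.refl⟩
  | tail _ hstep ih =>
    intro t ht
    obtain ⟨m₀, rfl, hm⟩ := ih t ht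
    obtain ⟨v₀, rfl, hv⟩ := step_reflect R S hRv hvarS hstep m₀ rfl
    exact ⟨v₀, rfl, hm.tail hv⟩

theorem steps_lift (R : Set (Tm α ara × Tm α ara)) (S : Set (Tm β arb × Tm β arb))
    {s s' : Tm α ara} (h : Steps R s s') :
    Steps (mapRules Sum.inl (fun _ => rfl) R ∪ mapRules Sum.inr (fun _ => rfl) S :
        Set (Tm (α ⊕ β) (Sum.elim ara arb) × Tm (α ⊕ β) (Sum.elim ara arb)))
      (eL s) (eL s') := by
  induction h with
  | refl => exact Relation.ReflTransGen.refl
  | tail _ hstep ih =>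
    exact ih.tail (step_mono Set.subset_union_left (step_lift R hstep))

/-- Restriction of an automaton over `α ⊕ β` to the alphabet `α`. -/
def restrictBTA {Q : Type} (A : BTA (α ⊕ β) (Sum.elim ara arb) Q) : BTA α ara Q where
  trans f qs q := A.trans (Sum.inl f) qs q
  eps := A.eps
  final := A.final

theorem reach_restrict_of {Q : Type} {A : BTA (α ⊕ β) (Sum.elim ara arb) Q}
    {t : Tm α ara} {q : Q} (h : (restrictBTA A).Reach t q) : A.Reach (eL t) q := by
  induction h with
  | @app f ts qs q hts htr ih =>
    rw [eL_app]
    exact BTA.Reach.app ih htr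
  | eps _ he ih => exact BTA.Reach.eps ih he

theorem reach_restrict_to {Q : Type} {A : BTA (α ⊕ β) (Sum.elim ara arb) Q}
    {u : Tm (α ⊕ β) (Sum.elim ara arb)} {q : Q} (h : A.Reach u q) :
    ∀ t : Tm α ara, u = eL t → (restrictBTA A).Reach t q := by
  induction h with
  | @app f ts qs q hts htr ih =>
    intro t ht
    cases t with
    | var n => simp [eL, Tm.map] at ht
    | app g ss =>
      rw [eL_app] at ht
      injection ht with h1 h2
      subst h1
      have h2' := eq_of_heq h2
      subst h2'
      exact BTA.Reach.app (fun i => ih i (ss i) rfl) htr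
  | eps _ he ih =>
    intro t ht
    exact BTA.Reach.eps (ih t ht) he

end StepTransfer2

theorem prf_map {σ γ : Type} {ar : σ → ℕ} {arγ : γ → ℕ} (j : σ → γ)
    (hj : Function.Injective j) (hja : ∀ s, arγ (j s) = ar s)
    {R : Set (Tm σ ar × Tm σ ar)} (hR : PRF R) : PRF (mapRules j hja R) := by
  intro γ' arγ' fin ι hι h L hLf hLg
  have hrec := hR γ' arγ' fin (fun s => ι (j s)) (fun a b hab => hj (hι hab))
    (fun s => (h (j s)).trans (hja s)) L hLf hLg
  rw [mapRules_map_map]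
  exact hrec

theorem extract {α β : Type} {ara : α → ℕ} {arb : β → ℕ} [Finite β]
    (R : Set (Tm α ara × Tm α ara)) (S : Set (Tm β arb × Tm β arb))
    (hRv : ∀ lr ∈ R, lr.2.vars ⊆ lr.1.vars)
    (hvarS : ∀ lr ∈ S, ¬ IsVarTm lr.1)
    (hU : PRF (mapRules Sum.inl (fun _ => rfl) R ∪ mapRules Sum.inr (fun _ => rfl) S :
        Set (Tm (α ⊕ β) (Sum.elim ara arb) × Tm (α ⊕ β) (Sum.elim ara arb)))) :
    PRF R := by
  intro γ arγ finγ ι hι h L hLf hLg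
  haveI := finγ
  set Rγ : Set (Tm γ arγ × Tm γ arγ) := mapRules ι h R with hRγdef
  -- transported variable conditions
  have hRγv : ∀ lr ∈ Rγ, lr.2.vars ⊆ lr.1.vars := by
    rintro ⟨l, r⟩ ⟨⟨l₀, r₀⟩, hmem, heq⟩
    cases heq
    show (r₀.map ι h).vars ⊆ (l₀.map ι h).vars
    rw [Tm.vars_map, Tm.vars_map]
    exact hRv _ hmem
  -- apply the hypothesis over the extended alphabet γ ⊕ β
  have hinj : Function.Injective (Sum.map ι (id : β → β)) :=
    Function.Injective.sumMap hι Function.injective_id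
  have h' : ∀ x : α ⊕ β, Sum.elim arγ arb (Sum.map ι id x) = Sum.elim ara arb x := by
    rintro (s | s)
    · exact h s
    · rfl
  have hLg' : ∀ t ∈ eL (arb := arb) '' L, t.Ground := by
    rintro t ⟨t₀, ht₀, rfl⟩
    exact Tm.ground_map _ _ (hLg _ ht₀)
  have hrec := hU (γ ⊕ β) (Sum.elim arγ arb) inferInstance (Sum.map ι id) hinj h'
    (eL '' L) (hLf.image _) hLg'
  have hid : mapRules (Sum.map ι id) h'
        (mapRules Sum.inl (fun _ => rfl) R ∪ mapRules Sum.inr (fun _ => rfl) S) =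
      (mapRules Sum.inl (fun _ => rfl) Rγ ∪ mapRules Sum.inr (fun _ => rfl) S :
        Set (Tm (γ ⊕ β) (Sum.elim arγ arb) × Tm (γ ⊕ β) (Sum.elim arγ arb))) := by
    erw [mapRules_union, mapRules_map_map, mapRules_map_map, hRγdef, mapRules_map_map]
    rfl
  rw [hid] at hrec
  obtain ⟨Q, finQ, A, hA⟩ := hrec
  refine ⟨Q, finQ, restrictBTA A, ?_⟩
  ext t
  constructor
  · rintro ⟨q, hq, hreach⟩
    have : eL t ∈ A.Lang := ⟨q, hq, reach_restrict_of hreach⟩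
    rw [hA] at this
    obtain ⟨p, ⟨p₀, hp₀, rfl⟩, hsteps⟩ := this
    obtain ⟨v₀, hv, hst⟩ := steps_reflect Rγ S hRγv hvarS hsteps p₀ rfl
    have : t = v₀ := eL_injective hv
    exact ⟨p₀, hp₀, this ▸ hst⟩
  · rintro ⟨q₀, hq₀, hsteps⟩
    have hmem : eL (arb := arb) t ∈ A.Lang := by
      rw [hA]
      exact ⟨eL q₀, ⟨q₀, hq₀, rfl⟩, steps_lift Rγ S hsteps⟩
    obtain ⟨q, hq, hreach⟩ := hmem
    exact ⟨q, hq, reach_restrict_to hreach t rfl⟩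

theorem stmt_18 {σ δ : Type} {ar : σ → ℕ} {arδ : δ → ℕ} [Finite σ] [Finite δ]
    (R : Set (Tm σ ar × Tm σ ar)) (S : Set (Tm δ arδ × Tm δ arδ))
    (hR : IsTRS R) (hS : IsTRS S)
    -- no left-hand side of a rule of `R ⊕ S` is a variable
    (hvarR : ∀ lr ∈ R, ¬ IsVarTm lr.1) (hvarS : ∀ lr ∈ S, ¬ IsVarTm lr.1)
    -- `R ⊕ S`, the TRS `R ∪ S` over `Σ ∪ Δ = σ ⊕ δ`, is a PRF-TRS
    (hPRF : PRF (mapRules (Sum.inl : σ → σ ⊕ δ) (fun _ => rfl) R ∪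
      mapRules (Sum.inr : δ → σ ⊕ δ) (fun _ => rfl) S :
        Set (Tm (σ ⊕ δ) (Sum.elim ar arδ) × Tm (σ ⊕ δ) (Sum.elim ar arδ)))) :
    PRF R ∧ PRF S := by
  constructor
  · exact extract R S hR.2 hvarS hPRF
  · have hswa : ∀ x : σ ⊕ δ, Sum.elim arδ ar (Sum.swap x) = Sum.elim ar arδ x := by
      rintro (s | s) <;> rfl
    have hswap := prf_map Sum.swap (Function.LeftInverse.injective Sum.swap_swap) hswa hPRF
    have hid : mapRules Sum.swap hswa
          (mapRules (Sum.inl : σ → σ ⊕ δ) (fun _ => rfl) R ∪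
            mapRules (Sum.inr : δ → σ ⊕ δ) (fun _ => rfl) S) =
        (mapRules Sum.inl (fun _ => rfl) S ∪ mapRules Sum.inr (fun _ => rfl) R :
          Set (Tm (δ ⊕ σ) (Sum.elim arδ ar) × Tm (δ ⊕ σ) (Sum.elim arδ ar))) := by
      erw [mapRules_union, mapRules_map_map, mapRules_map_map, Set.union_comm]
      rfl
    rw [hid] at hswap
    exact extract S R hS.2 hvarR hswap
end
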